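/- Let q : V → K be a diagonalizable anisotropic quadratic form over a field of characteristic 2. Then the similitude group GO(q) acts freely (regularly on each orbit) on V \ {0}; in particular any subgroup G ≤ GO(q) acting transitively on V \ {0} equals GO(q). -/

import Mathlib

/-- The similitude group of a diagonalizable anisotropic quadratic form in
characteristic 2 acts freely on V \ {0}; any transitive subgroup is the whole
similitude group. -/
theorem similitudes_act_freely {K V : Type*} [Field K] [CharP K 2]
    [AddCommGroup V] [Module K V]
    (q : QuadraticForm K V)
    (hdiag : ∀ x y : V, QuadraticMap.polar q x y = 0)
    (haniso : QuadraticMap.Anisotropic q) :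
    (∀ φ : V ≃ₗ[K] V, (∃ r : K, r ≠ 0 ∧ ∀ v, q (φ v) = r * q v) →
        ∀ v : V, v ≠ 0 → φ v = v → ∀ w, φ w = w) ∧
    (∀ G : Subgroup (V ≃ₗ[K] V),
        (∀ φ ∈ G, ∃ r : K, r ≠ 0 ∧ ∀ v, q (φ v) = r * q v) →
        (∀ v w : V, v ≠ 0 → w ≠ 0 → ∃ φ ∈ G, φ v = w) →
        ∀ ψ : V ≃ₗ[K] V, (∃ r : K, r ≠ 0 ∧ ∀ v, q (ψ v) = r * q v) → ψ ∈ G) := by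
  have h2 : (2 : K) = 0 := by exact_mod_cast CharP.cast_eq_zero K 2
  have hadd : ∀ x y : V, q (x + y) = q x + q y := by
    intro x y
    have h := hdiag x y
    unfold QuadraticMap.polar at h
    linear_combination h
  have part1 : ∀ φ : V ≃ₗ[K] V, (∃ r : K, r ≠ 0 ∧ ∀ v, q (φ v) = r * q v) →
      ∀ v : V, v ≠ 0 → φ v = v → ∀ w, φ w = w := by
    rintro φ ⟨r, hr, hsim⟩ v hv hfix w
    have hqv : q v ≠ 0 := fun h => hv (haniso v h)
    have hr1 : r = 1 := by
      have h := hsim v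
      rw [hfix] at h
      have h' : (r - 1) * q v = 0 := by linear_combination -h
      rcases mul_eq_zero.mp h' with h'' | h''
      · exact sub_eq_zero.mp h''
      · exact absurd h'' hqv
    have hz : q (φ w - w) = 0 := by
      have e : q (φ w - w) = q (φ w) + q w := by
        rw [sub_eq_add_neg, hadd, QuadraticMap.map_neg]
      rw [e, hsim w, hr1, one_mul, ← two_mul, h2, zero_mul]
    exact sub_eq_zero.mp (haniso _ hz)
  refine ⟨part1, ?_⟩
  intro G hGsim htrans ψ hψ
  by_cases hV : ∀ v : V, v = 0
  · have hψ1 : ψ = 1 := by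
      ext w
      rw [hV w, map_zero]
      exact (hV _).symm
    rw [hψ1]; exact G.one_mem
  · push_neg at hV
    obtain ⟨v, hv⟩ := hV
    obtain ⟨r, hr, hsim⟩ := hψ
    have hψv : ψ v ≠ 0 := by
      intro h
      have h0 : q (ψ v) = 0 := by rw [h, map_zero]
      rw [hsim] at h0
      rcases mul_eq_zero.mp h0 with h' | h'
      · exact hr h'
      · exact hv (haniso v h')
    obtain ⟨φ, hφG, hφv⟩ := htrans v (ψ v) hv hψv
    obtain ⟨s, hs, hφsim⟩ := hGsim φ hφG
    have hφsymm : ∀ x, q (φ.symm x) = s⁻¹ * q x := by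
      intro x
      have := hφsim (φ.symm x)
      rw [φ.apply_symm_apply] at this
      field_simp [this]
      rw [this]; ring
    have hχ : ∀ w, φ.symm (ψ w) = w := by
      apply part1 (ψ.trans φ.symm) ⟨s⁻¹ * r, by simp [hr, hs], ?_⟩ v hv ?_
      · intro w
        simp only [LinearEquiv.trans_apply, hφsymm, hsim]
        ring
      · simp only [LinearEquiv.trans_apply, ← hφv, φ.symm_apply_apply]
    have : ψ = φ := by
      ext w
      have := hχ w
      calc ψ w = φ (φ.symm (ψ w)) := (φ.apply_symm_apply _).symm
        _ = φ w := by rw [this]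
    rw [this]; exact hφG
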